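/- arXiv:2104.02134 — 2 statements merged into one kernel-verified Lean document; each statement's English description precedes it below -/
import Mathlib

section
/- Let r, p, q be natural numbers with r ≥ 1, let Φ₁,…,Φ_p and Θ₁,…,Θ_q be real r×r matrices, and define the matrix polynomials Φ(z) = I − Φ₁z − ⋯ − Φ_p z^p and Θ(z) = I + Θ₁z + ⋯ + Θ_q z^q for z ∈ ℂ. Assume det Φ(z) ≠ 0 for all z ∈ ℂ with |z| ≤ 1. Let d₁,…,d_r ∈ ℝ and λ₁,…,λ_r ∈ ℝ with λ_k > 0 for every k, and let Δ^{−d,λ}(z) denote the diagonal complex r×r matrix with k-th diagonal entry (1 − e^{−λ_k} z)^{−d_k}. Then there exists a sequence of complex r×r matrices (Ψ_j)_{j≥0} with ∑_{j=0}^∞ ‖Ψ_j‖ < ∞ such that for every z ∈ ℂ with |z| ≤ 1 the series ∑_{j=0}^∞ Ψ_j z^j converges and equals Δ^{−d,λ}(z) · Φ(z)⁻¹ · Θ(z). -/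
open scoped BigOperators

open scoped NNReal ENNReal

attribute [local instance] Matrix.frobeniusNormedAddCommGroup

/-- The autoregressive matrix polynomial `Φ(z) = I - Φ₁ z - ⋯ - Φ_p z^p`
(real coefficient matrices viewed as complex matrices). -/
noncomputable def arPoly {r : ℕ} (p : ℕ) (Φ : Fin p → Matrix (Fin r) (Fin r) ℝ) (z : ℂ) :
    Matrix (Fin r) (Fin r) ℂ :=
  1 - ∑ i : Fin p, z ^ ((i : ℕ) + 1) • (Φ i).map (Complex.ofReal)

/-- The moving-average matrix polynomial `Θ(z) = I + Θ₁ z + ⋯ + Θ_q z^q`. -/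
noncomputable def maPoly {r : ℕ} (q : ℕ) (Θ : Fin q → Matrix (Fin r) (Fin r) ℝ) (z : ℂ) :
    Matrix (Fin r) (Fin r) ℂ :=
  1 + ∑ i : Fin q, z ^ ((i : ℕ) + 1) • (Θ i).map (Complex.ofReal)

/-- The inverse tempered fractional differencing diagonal matrix `Δ^{-d,λ}(z)`,
with `k`-th diagonal entry `(1 - e^{-λ_k} z)^{-d_k}` (principal-branch complex power). -/
noncomputable def tempDiag {r : ℕ} (d lam : Fin r → ℝ) (z : ℂ) :
    Matrix (Fin r) (Fin r) ℂ :=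
  Matrix.diagonal (fun k => (1 - Complex.exp (-(lam k : ℂ)) * z) ^ (-(d k) : ℂ))

attribute [local instance] Matrix.frobeniusNormedSpace

namespace VartfimaAux

/-- The identity, as a continuous linear map from the pi type to the matrix type
(with the Frobenius norm). -/
noncomputable def matOfPiCLM (r : ℕ) :
    ((Fin r) → (Fin r) → ℂ) →L[ℂ] Matrix (Fin r) (Fin r) ℂ :=
  LinearMap.toContinuousLinearMap
    { toFun := fun f => Matrix.of f
      map_add' := fun _ _ => rfl
      map_smul' := fun _ _ => rfl }

theorem differentiableAt_matrix {r : ℕ} {g : ℂ → Matrix (Fin r) (Fin r) ℂ} {z : ℂ}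
    (h : ∀ i j, DifferentiableAt ℂ (fun w => g w i j) z) :
    DifferentiableAt ℂ g z := by
  have hg : g = fun w => matOfPiCLM r (fun i j => g w i j) := rfl
  rw [hg]
  exact ((matOfPiCLM r).differentiableAt).comp z
    (differentiableAt_pi.2 fun i => differentiableAt_pi.2 fun j => h i j)

theorem differentiableAt_det {r : ℕ} {g : ℂ → Matrix (Fin r) (Fin r) ℂ} {z : ℂ}
    (h : ∀ i j, DifferentiableAt ℂ (fun w => g w i j) z) :
    DifferentiableAt ℂ (fun w => (g w).det) z := by
  have hdet : (fun w => (g w).det)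
      = fun w => ∑ σ : Equiv.Perm (Fin r),
          (((Equiv.Perm.sign σ : ℤ)) : ℂ) * ∏ i, g w (σ i) i := by
    funext w
    rw [Matrix.det_apply']
  rw [hdet]
  exact DifferentiableAt.fun_sum fun σ _ =>
    (DifferentiableAt.fun_finsetProd fun i _ => h (σ i) i).const_mul _

theorem differentiableAt_arPoly_entry {r p : ℕ} (Φm : Fin p → Matrix (Fin r) (Fin r) ℝ)
    (i j : Fin r) (z : ℂ) :
    DifferentiableAt ℂ (fun w => arPoly p Φm w i j) z := by
  have h : (fun w => arPoly p Φm w i j)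
      = fun w => (1 : Matrix (Fin r) (Fin r) ℂ) i j
          - ∑ t : Fin p, w ^ ((t : ℕ) + 1) * ((Φm t).map Complex.ofReal i j) := by
    funext w
    simp [arPoly, Matrix.sub_apply, Matrix.sum_apply, Matrix.smul_apply, smul_eq_mul]
  rw [h]
  exact (differentiableAt_const _).sub
    (DifferentiableAt.fun_sum fun t _ => (differentiableAt_pow _).mul_const _)

theorem differentiableAt_maPoly_entry {r q : ℕ} (Θm : Fin q → Matrix (Fin r) (Fin r) ℝ)
    (i j : Fin r) (z : ℂ) :
    DifferentiableAt ℂ (fun w => maPoly q Θm w i j) z := by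
  have h : (fun w => maPoly q Θm w i j)
      = fun w => (1 : Matrix (Fin r) (Fin r) ℂ) i j
          + ∑ t : Fin q, w ^ ((t : ℕ) + 1) * ((Θm t).map Complex.ofReal i j) := by
    funext w
    simp [maPoly, Matrix.add_apply, Matrix.sum_apply, Matrix.smul_apply, smul_eq_mul]
  rw [h]
  exact (differentiableAt_const _).add
    (DifferentiableAt.fun_sum fun t _ => (differentiableAt_pow _).mul_const _)

theorem differentiableAt_inv_entry {r p : ℕ} (Φm : Fin p → Matrix (Fin r) (Fin r) ℝ)
    {z : ℂ} (hz : (arPoly p Φm z).det ≠ 0) (i j : Fin r) :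
    DifferentiableAt ℂ (fun w => (arPoly p Φm w)⁻¹ i j) z := by
  have h : (fun w => (arPoly p Φm w)⁻¹ i j)
      = fun w => ((arPoly p Φm w).det)⁻¹ * ((arPoly p Φm w).updateRow j
          (Pi.single i 1)).det := by
    funext w
    rw [Matrix.inv_def, Matrix.smul_apply, Matrix.adjugate_apply, Ring.inverse_eq_inv,
      smul_eq_mul]
  rw [h]
  refine DifferentiableAt.mul (DifferentiableAt.inv ?_ hz) ?_
  · exact differentiableAt_det fun a b => differentiableAt_arPoly_entry Φm a b z
  · refine differentiableAt_det fun a b => ?_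
    by_cases hb : a = j
    · subst hb
      simp only [Matrix.updateRow_self]
      exact differentiableAt_const _
    · simp only [Matrix.updateRow_ne hb]
      exact differentiableAt_arPoly_entry Φm a b z

end VartfimaAux

theorem vartfima_causal_absolutely_summable
    (r p q : ℕ) (hr : 1 ≤ r)
    (Φm : Fin p → Matrix (Fin r) (Fin r) ℝ) (Θm : Fin q → Matrix (Fin r) (Fin r) ℝ)
    (hΦ : ∀ z : ℂ, ‖z‖ ≤ 1 → (arPoly p Φm z).det ≠ 0)
    (d lam : Fin r → ℝ) (hlam : ∀ k, 0 < lam k) :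
    ∃ Ψ : ℕ → Matrix (Fin r) (Fin r) ℂ,
      Summable (fun j => ‖Ψ j‖) ∧
      ∀ z : ℂ, ‖z‖ ≤ 1 →
        HasSum (fun j : ℕ => z ^ j • Ψ j)
          (tempDiag d lam z * (arPoly p Φm z)⁻¹ * maPoly q Θm z) := by
  classical
  have hne : Nonempty (Fin r) := ⟨⟨0, hr⟩⟩
  -- the function of interest
  set F : ℂ → Matrix (Fin r) (Fin r) ℂ :=
    fun w => tempDiag d lam w * (arPoly p Φm w)⁻¹ * maPoly q Θm w with hF
  -- Step 1: find a radius R > 1 on which everything is nice.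
  have hopen : IsOpen {z : ℂ | (arPoly p Φm z).det ≠ 0} := by
    have hcont : Continuous fun w => (arPoly p Φm w).det := by
      have : Differentiable ℂ fun w => (arPoly p Φm w).det := fun z =>
        VartfimaAux.differentiableAt_det fun a b =>
          VartfimaAux.differentiableAt_arPoly_entry Φm a b z
      exact this.continuous
    exact isOpen_compl_iff.mpr (isClosed_singleton.preimage hcont)
  obtain ⟨δ, hδpos, hsub⟩ :=
    (isCompact_closedBall (0 : ℂ) 1).exists_thickening_subset_open hopen
      (fun z hz => hΦ z (by simpa using hz))
  set μ : ℝ := Finset.univ.inf' Finset.univ_nonempty (fun k : Fin r => Real.exp (lam k))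
    with hμdef
  have hμ1 : 1 < μ := by
    rw [hμdef, Finset.lt_inf'_iff]
    intro k _
    exact Real.one_lt_exp_iff.mpr (hlam k)
  set R : ℝ := min (1 + δ / 2) ((1 + μ) / 2) with hRdef
  have hR1 : 1 < R := by
    apply lt_min <;> linarith
  have hRexp : ∀ k : Fin r, R < Real.exp (lam k) := by
    intro k
    have h1 : R ≤ (1 + μ) / 2 := min_le_right _ _
    have h2 : (1 + μ) / 2 < μ := by linarith
    have h3 : μ ≤ Real.exp (lam k) := Finset.inf'_le _ (Finset.mem_univ k)
    linarith
  -- the determinant does not vanish on the closed ball of radius R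
  have hdet : ∀ z : ℂ, ‖z‖ ≤ R → (arPoly p Φm z).det ≠ 0 := by
    intro z hz
    by_cases h1 : ‖z‖ ≤ 1
    · exact hΦ z h1
    · push_neg at h1
      have hz0 : (0 : ℝ) < ‖z‖ := lt_trans one_pos h1
      set w : ℂ := (‖z‖)⁻¹ • z with hwdef
      have hwmem : w ∈ Metric.closedBall (0 : ℂ) 1 := by
        simp only [Metric.mem_closedBall, dist_zero_right, hwdef, norm_smul, norm_inv,
          Real.norm_eq_abs, abs_of_pos hz0]
        rw [inv_mul_cancel₀ (ne_of_gt hz0)]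
      have hdist : dist z w < δ := by
        have : z - w = (1 - (‖z‖)⁻¹) • z := by
          rw [hwdef, sub_smul, one_smul]
        rw [dist_eq_norm, this, norm_smul, Real.norm_eq_abs,
          abs_of_nonneg (by
            have : (‖z‖)⁻¹ ≤ 1 := by
              rw [inv_le_one_iff₀]; right; linarith
            linarith)]
        have hcomp : (1 - (‖z‖)⁻¹) * ‖z‖ = ‖z‖ - 1 := by
          rw [sub_mul, one_mul, inv_mul_cancel₀ (ne_of_gt hz0)]
        rw [hcomp]
        have hzR : ‖z‖ ≤ 1 + δ / 2 := le_trans hz (min_le_left _ _)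
        linarith
      have hthick : z ∈ Metric.thickening δ (Metric.closedBall (0 : ℂ) 1) :=
        Metric.mem_thickening_iff.mpr ⟨w, hwmem, hdist⟩
      exact hsub hthick
  -- slit-plane membership for the cpow bases
  have hslit : ∀ z : ℂ, ‖z‖ ≤ R → ∀ k : Fin r,
      (1 - Complex.exp (-(lam k : ℂ)) * z) ∈ Complex.slitPlane := by
    intro z hz k
    have hnorm : ‖Complex.exp (-(lam k : ℂ)) * z‖ < 1 := by
      rw [norm_mul]
      have h1 : ‖Complex.exp (-(lam k : ℂ))‖ = Real.exp (-(lam k)) := by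
        rw [Complex.norm_exp]
        norm_num
      rw [h1]
      calc Real.exp (-(lam k)) * ‖z‖ ≤ Real.exp (-(lam k)) * R :=
            mul_le_mul_of_nonneg_left hz (Real.exp_pos _).le
        _ < Real.exp (-(lam k)) * Real.exp (lam k) :=
            mul_lt_mul_of_pos_left (hRexp k) (Real.exp_pos _)
        _ = 1 := by rw [← Real.exp_add]; norm_num
    refine Complex.mem_slitPlane_iff.mpr (Or.inl ?_)
    have h2 : (Complex.exp (-(lam k : ℂ)) * z).re ≤ ‖Complex.exp (-(lam k : ℂ)) * z‖ := by
      exact Complex.re_le_norm _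
    have h3 : (Complex.exp (-(lam k : ℂ)) * z).re < 1 := lt_of_le_of_lt h2 hnorm
    simp only [Complex.sub_re, Complex.one_re]
    linarith
  -- Step 2: differentiability of F on the closed ball of radius R
  have hdiffF : ∀ z : ℂ, ‖z‖ ≤ R → DifferentiableAt ℂ F z := by
    intro z hz
    have hT : ∀ i j, DifferentiableAt ℂ (fun w => tempDiag d lam w i j) z := by
      intro i j
      by_cases hij : i = j
      · subst hij
        have heq : (fun w => tempDiag d lam w i i)
            = fun w => (1 - Complex.exp (-(lam i : ℂ)) * w) ^ (-(d i) : ℂ) := by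
          funext w
          simp [tempDiag, Matrix.diagonal_apply_eq]
        rw [heq]
        refine DifferentiableAt.cpow ?_ (differentiableAt_const _) (hslit z hz i)
        exact (differentiableAt_const _).sub
          ((differentiableAt_const _).mul differentiableAt_id)
      · have heq : (fun w => tempDiag d lam w i j) = fun _ => (0 : ℂ) := by
          funext w
          simp [tempDiag, Matrix.diagonal_apply_ne _ hij]
        rw [heq]
        exact differentiableAt_const _
    have hI : ∀ i j, DifferentiableAt ℂ (fun w => (arPoly p Φm w)⁻¹ i j) z :=
      fun i j => VartfimaAux.differentiableAt_inv_entry Φm (hdet z hz) i j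
    refine VartfimaAux.differentiableAt_matrix fun i j => ?_
    have heq : (fun w => F w i j)
        = fun w => ∑ l, (∑ k, tempDiag d lam w i k * (arPoly p Φm w)⁻¹ k l)
            * maPoly q Θm w l j := by
      funext w
      simp [hF, Matrix.mul_apply]
    rw [heq]
    refine DifferentiableAt.fun_sum fun l _ => DifferentiableAt.mul ?_
      (VartfimaAux.differentiableAt_maPoly_entry Θm l j z)
    exact DifferentiableAt.fun_sum fun k _ => (hT i k).mul (hI k l)
  -- Step 3: power series expansion on the ball of radius R
  have hR0 : (0 : ℝ) < R := by linarith
  set Rnn : ℝ≥0 := ⟨R, hR0.le⟩ with hRnn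
  have hRnnR : (Rnn : ℝ) = R := rfl
  have hdOn : DifferentiableOn ℂ F (Metric.closedBall 0 (Rnn : ℝ)) := by
    intro z hz
    refine (hdiffF z ?_).differentiableWithinAt
    simpa [hRnnR] using Metric.mem_closedBall.mp hz
  have hRnnpos : 0 < Rnn := by
    rw [← NNReal.coe_pos, hRnnR]
    exact hR0
  have hball := hdOn.hasFPowerSeriesOnBall hRnnpos
  set P := cauchyPowerSeries F 0 Rnn with hPdef
  have h1R : (1 : ℝ≥0∞) < (Rnn : ℝ≥0∞) := by
    rw [← ENNReal.coe_one, ENNReal.coe_lt_coe, ← NNReal.coe_lt_coe, hRnnR, NNReal.coe_one]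
    exact hR1
  refine ⟨fun j => P.coeff j, ?_, ?_⟩
  · have hsum := P.summable_norm_mul_pow (r := 1) (lt_of_lt_of_le h1R hball.r_le)
    have hs2 : Summable fun n => ‖P n‖ := by simpa using hsum
    have hle : ∀ n : ℕ, ‖P.coeff n‖ ≤ ‖P n‖ := by
      intro n
      calc ‖P.coeff n‖ = ‖P n fun _ => (1 : ℂ)‖ := rfl
        _ ≤ ‖P n‖ * ∏ _i : Fin n, ‖(1 : ℂ)‖ := (P n).le_opNorm _
        _ = ‖P n‖ := by simp
    exact Summable.of_nonneg_of_le (fun n => norm_nonneg _) hle hs2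
  · intro z hz
    have hmem : z ∈ Metric.eball (0 : ℂ) Rnn := by
      rw [Metric.mem_eball, edist_zero_right, enorm_eq_nnnorm, ENNReal.coe_lt_coe, ← NNReal.coe_lt_coe,
        coe_nnnorm, hRnnR]
      exact lt_of_le_of_lt hz hR1
    have hsum := hball.hasSum_sub hmem
    simp only [hF, sub_zero, FormalMultilinearSeries.apply_eq_pow_smul_coeff] at hsum
    exact hsum
end

section
/- Let (Ω, ℱ, P) be a probability space, r ≥ 1, and let ε : ℤ → Ω → (Fin r → ℝ) be a family of random vectors such that each component ε_{t,k} is square-integrable, E[ε_{t,k}] = 0 for all t ∈ ℤ and k, E[ε_{s,k} ε_{t,l}] = 0 whenever s ≠ t, and E[ε_{t,k} ε_{t,l}] = Σ_{kl} for all t, where Σ is a fixed real symmetric positive semidefinite r×r matrix. Let Ψ : ℕ → Matrix (Fin r) (Fin r) ℝ satisfy ∑_{j=0}^∞ ‖Ψ_j‖ < ∞. Then for every t ∈ ℤ the partial sums S_N(t) = ∑_{j=0}^{N} Ψ_j ε_{t−j} converge componentwise in L²(P) to a limit Y_t as N → ∞, and for all t ∈ ℤ, τ ∈ ℕ and all indices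 k, l: E[Y_{t,k} Y_{t−τ,l}] = ∑_{j=0}^∞ (Ψ_{j+τ} Σ Ψ_jᵀ)_{kl}; in particular this second moment does not depend on t, so the process (Y_t) is weakly stationary with autocovariance matrix function γ(τ) = ∑_{j=0}^∞ Ψ_{j+τ} Σ Ψ_jᵀ. -/
open MeasureTheory Filter Matrix
open scoped BigOperators InnerProductSpace

attribute [local instance] Matrix.frobeniusNormedAddCommGroup

private lemma entry_le_frobenius {m n : Type*} [Fintype m] [Fintype n]
    (A : Matrix m n ℝ) (i : m) (j : n) : ‖A i j‖ ≤ ‖A‖ := by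
  rw [Matrix.frobenius_norm_def]
  have h1 : (‖A i j‖ ^ (2:ℝ)) ^ ((1:ℝ)/2) = ‖A i j‖ := by
    rw [← Real.rpow_mul (norm_nonneg _)]; norm_num
  calc ‖A i j‖ = (‖A i j‖ ^ (2:ℝ)) ^ ((1:ℝ)/2) := h1.symm
    _ ≤ (∑ i', ∑ j', ‖A i' j'‖ ^ (2:ℝ)) ^ ((1:ℝ)/2) := by
        refine Real.rpow_le_rpow (Real.rpow_nonneg (norm_nonneg _) _) ?_ (by norm_num)
        calc ‖A i j‖ ^ (2:ℝ) ≤ ∑ j', ‖A i j'‖ ^ (2:ℝ) :=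
              Finset.single_le_sum (fun _ _ => Real.rpow_nonneg (norm_nonneg _) _)
                (Finset.mem_univ j)
          _ ≤ ∑ i', ∑ j', ‖A i' j'‖ ^ (2:ℝ) :=
              Finset.single_le_sum
                (fun _ _ => Finset.sum_nonneg fun _ _ => Real.rpow_nonneg (norm_nonneg _) _)
                (Finset.mem_univ i)

private lemma lp_coeFn_sum {Ω : Type*} [MeasurableSpace Ω] {P : Measure Ω}
    {ι : Type*} (s : Finset ι) (f : ι → Lp ℝ 2 P) :
    ⇑(∑ i ∈ s, f i) =ᵐ[P] fun ω => ∑ i ∈ s, f i ω := by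
  classical
  induction s using Finset.induction_on with
  | empty =>
      simp only [Finset.sum_empty]
      exact Lp.coeFn_zero (E := ℝ) (p := 2) (μ := P)
  | insert _ _ hx ih =>
      rw [Finset.sum_insert hx]
      filter_upwards [Lp.coeFn_add (f _) (∑ i ∈ _, f i), ih] with ω h1 h2
      rw [h1, Pi.add_apply, h2, Finset.sum_insert hx]

theorem linear_process_L2_convergence_and_stationarity
    {Ω : Type*} [MeasurableSpace Ω] (P : Measure Ω) [IsProbabilityMeasure P]
    (r : ℕ) (hr : 1 ≤ r)
    (ε : ℤ → Ω → (Fin r → ℝ))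
    (Sig : Matrix (Fin r) (Fin r) ℝ) (hSigSymm : Sig.IsSymm) (hSigPSD : Sig.PosSemidef)
    (hL2 : ∀ (t : ℤ) (k : Fin r), MemLp (fun ω => ε t ω k) 2 P)
    (hmean : ∀ (t : ℤ) (k : Fin r), ∫ ω, ε t ω k ∂P = 0)
    (huncorr : ∀ (s t : ℤ) (k l : Fin r), s ≠ t → ∫ ω, ε s ω k * ε t ω l ∂P = 0)
    (hcov : ∀ (t : ℤ) (k l : Fin r), ∫ ω, ε t ω k * ε t ω l ∂P = Sig k l)
    (Ψ : ℕ → Matrix (Fin r) (Fin r) ℝ) (hΨ : Summable (fun j => ‖Ψ j‖)) :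
    ∃ Y : ℤ → Ω → (Fin r → ℝ),
      (∀ (t : ℤ) (k : Fin r), MemLp (fun ω => Y t ω k) 2 P) ∧
      (∀ (t : ℤ) (k : Fin r),
        Tendsto
          (fun N : ℕ =>
            ∫ ω,
              ((∑ j ∈ Finset.range (N + 1), (Ψ j).mulVec (ε (t - (j : ℤ)) ω)) k
                - Y t ω k) ^ 2 ∂P)
          atTop (nhds 0)) ∧
      (∀ (t : ℤ) (τ : ℕ) (k l : Fin r),
        ∫ ω, Y t ω k * Y (t - (τ : ℤ)) ω l ∂P =
          ∑' j : ℕ, (Ψ (j + τ) * Sig * (Ψ j)ᵀ) k l) := by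
  classical
  set e : ℤ → Fin r → Lp ℝ 2 P := fun s m => (hL2 s m).toLp _ with he
  have hecoe : ∀ s m, (e s m : Ω → ℝ) =ᵐ[P] fun ω => ε s ω m :=
    fun s m => (hL2 s m).coeFn_toLp
  have hinner_e : ∀ s u : ℤ, ∀ m n : Fin r,
      ⟪e s m, e u n⟫_ℝ = ∫ ω, ε s ω m * ε u ω n ∂P := by
    intro s u m n
    rw [L2.inner_def]
    refine integral_congr_ae ?_
    filter_upwards [hecoe s m, hecoe u n] with ω h1 h2
    simp [h1, h2, RCLike.inner_apply, mul_comm]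
  have hnorm_e : ∀ (s : ℤ) (m : Fin r), ‖e s m‖ ≤ Real.sqrt (Sig m m) := by
    intro s m
    have h2 : ‖e s m‖ ^ 2 = Sig m m := by
      rw [← real_inner_self_eq_norm_sq, hinner_e, hcov]
    rw [← h2, Real.sqrt_sq (norm_nonneg _)]
  set g : ℤ → Fin r → ℕ → Lp ℝ 2 P :=
    fun t k j => ∑ m, Ψ j k m • e (t - (j : ℤ)) m with hgdef
  set C : ℝ := ∑ m : Fin r, Real.sqrt (Sig m m) with hC
  have hgnorm : ∀ t k j, ‖g t k j‖ ≤ ‖Ψ j‖ * C := by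
    intro t k j
    calc ‖g t k j‖ ≤ ∑ m, ‖Ψ j k m • e (t - (j : ℤ)) m‖ := norm_sum_le _ _
      _ ≤ ∑ m, ‖Ψ j‖ * Real.sqrt (Sig m m) := by
          refine Finset.sum_le_sum fun m _ => ?_
          rw [norm_smul]
          exact mul_le_mul (entry_le_frobenius _ _ _) (hnorm_e _ _) (norm_nonneg _)
            (norm_nonneg _)
      _ = ‖Ψ j‖ * C := by rw [hC, Finset.mul_sum]
  have hgsum : ∀ t k, Summable (g t k) := fun t k =>
    Summable.of_norm_bounded (hΨ.mul_right C) (hgnorm t k)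
  set S : ℤ → Fin r → Lp ℝ 2 P := fun t k => ∑' j, g t k j with hSdef
  have hinner_g : ∀ (t t' : ℤ) (k l : Fin r) (i j : ℕ),
      ⟪g t k i, g t' l j⟫_ℝ =
        ∑ m, ∑ n, Ψ i k m * Ψ j l n *
          (∫ ω, ε (t - (i : ℤ)) ω m * ε (t' - (j : ℤ)) ω n ∂P) := by
    intro t t' k l i j
    rw [hgdef]
    rw [sum_inner]
    refine Finset.sum_congr rfl fun m _ => ?_
    rw [inner_sum]
    refine Finset.sum_congr rfl fun n _ => ?_
    rw [real_inner_smul_left, real_inner_smul_right, hinner_e]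
    ring
  have hinner_g_ne : ∀ (t t' : ℤ) (k l : Fin r) (i j : ℕ),
      t - (i : ℤ) ≠ t' - (j : ℤ) → ⟪g t k i, g t' l j⟫_ℝ = 0 := by
    intro t t' k l i j h
    rw [hinner_g]
    refine Finset.sum_eq_zero fun m _ => Finset.sum_eq_zero fun n _ => ?_
    rw [huncorr _ _ _ _ h, mul_zero]
  have hinner_g_eq : ∀ (t : ℤ) (τ : ℕ) (k l : Fin r) (j : ℕ),
      ⟪g t k (j + τ), g (t - (τ : ℤ)) l j⟫_ℝ = (Ψ (j + τ) * Sig * (Ψ j)ᵀ) k l := by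
    intro t τ k l j
    rw [hinner_g]
    have ht : t - ((j + τ : ℕ) : ℤ) = t - (τ : ℤ) - (j : ℤ) := by push_cast; ring
    have : ∀ m n : Fin r,
        ∫ ω, ε (t - ((j + τ : ℕ) : ℤ)) ω m * ε (t - (τ : ℤ) - (j : ℤ)) ω n ∂P =
          Sig m n := by
      intro m n; rw [ht, hcov]
    simp only [this, Matrix.mul_apply, Matrix.transpose_apply, Finset.sum_mul]
    rw [Finset.sum_comm]
    exact Finset.sum_congr rfl fun n _ => Finset.sum_congr rfl fun m _ => by ring
  refine ⟨fun t ω k => S t k ω, fun t k => Lp.memLp _, ?_, ?_⟩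
  · -- L² convergence
    intro t k
    have hpartial : ∀ N : ℕ,
        ((∑ j ∈ Finset.range (N + 1), g t k j : Lp ℝ 2 P) : Ω → ℝ) =ᵐ[P]
          fun ω => (∑ j ∈ Finset.range (N + 1), (Ψ j).mulVec (ε (t - (j : ℤ)) ω)) k := by
      intro N
      have h1 := lp_coeFn_sum (Finset.range (N + 1)) (g t k)
      have h2 : ∀ j ∈ Finset.range (N + 1),
          (g t k j : Ω → ℝ) =ᵐ[P] fun ω => (Ψ j).mulVec (ε (t - (j : ℤ)) ω) k := by
        intro j _
        have h3 := lp_coeFn_sum (Finset.univ : Finset (Fin r))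
          (fun m => Ψ j k m • e (t - (j : ℤ)) m)
        have h4 : ∀ m : Fin r, ((Ψ j k m • e (t - (j : ℤ)) m : Lp ℝ 2 P) : Ω → ℝ) =ᵐ[P]
            fun ω => Ψ j k m * ε (t - (j : ℤ)) ω m := by
          intro m
          filter_upwards [Lp.coeFn_smul (Ψ j k m) (e (t - (j : ℤ)) m), hecoe (t - (j : ℤ)) m]
            with ω hs hc
          rw [hs, Pi.smul_apply, hc, smul_eq_mul]
        have h5 : ∀ᵐ ω ∂P, ∀ m : Fin r,
            ((Ψ j k m • e (t - (j : ℤ)) m : Lp ℝ 2 P) : Ω → ℝ) ω =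
              Ψ j k m * ε (t - (j : ℤ)) ω m :=
          (ae_all_iff).2 h4
        filter_upwards [h3, h5] with ω hω hω'
        rw [hgdef]
        simp only [hω]
        rw [Matrix.mulVec, dotProduct]
        exact Finset.sum_congr rfl fun m _ => hω' m
      have h6 : ∀ᵐ ω ∂P, ∀ j ∈ Finset.range (N + 1),
          (g t k j : Ω → ℝ) ω = (Ψ j).mulVec (ε (t - (j : ℤ)) ω) k := by
        exact (Filter.eventually_all_finset _).2 fun j hj => h2 j hj
      filter_upwards [h1, h6] with ω hω hω'
      rw [hω, Finset.sum_apply]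
      exact Finset.sum_congr rfl fun j hj => hω' j hj
    have htend : Tendsto (fun N : ℕ => ∑ j ∈ Finset.range (N + 1), g t k j)
        atTop (nhds (S t k)) := by
      have h := (hgsum t k).hasSum.tendsto_sum_nat
      exact h.comp (tendsto_add_atTop_nat 1)
    have hnorm2 : Tendsto
        (fun N : ℕ => ‖(∑ j ∈ Finset.range (N + 1), g t k j) - S t k‖ ^ 2)
        atTop (nhds 0) := by
      have h0 : Tendsto
          (fun N : ℕ => ‖(∑ j ∈ Finset.range (N + 1), g t k j) - S t k‖)
          atTop (nhds 0) := tendsto_iff_norm_sub_tendsto_zero.mp htend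
      simpa using h0.pow 2
    refine Tendsto.congr (fun N => ?_) hnorm2
    rw [← real_inner_self_eq_norm_sq, L2.inner_def]
    refine integral_congr_ae ?_
    filter_upwards [Lp.coeFn_sub (∑ j ∈ Finset.range (N + 1), g t k j) (S t k), hpartial N]
      with ω h1 h2
    rw [h1, Pi.sub_apply, h2]
    simp [RCLike.inner_apply, sq]
  · -- autocovariance
    intro t τ k l
    have key : ∫ ω, S t k ω * S (t - (τ : ℤ)) l ω ∂P = ⟪S t k, S (t - (τ : ℤ)) l⟫_ℝ := by
      rw [L2.inner_def]
      refine integral_congr_ae (Eventually.of_forall fun ω => ?_)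
      simp [RCLike.inner_apply, mul_comm]
    rw [key]
    have h1 : ⟪S t k, S (t - (τ : ℤ)) l⟫_ℝ =
        ∑' j, ⟪S t k, g (t - (τ : ℤ)) l j⟫_ℝ := by
      simp_rw [← innerSL_apply_apply (𝕜 := ℝ)]
      rw [hSdef]
      exact (innerSL ℝ (S t k)).map_tsum (hgsum _ _)
    have h2 : ∀ j : ℕ, ⟪S t k, g (t - (τ : ℤ)) l j⟫_ℝ =
        ∑' i, ⟪g t k i, g (t - (τ : ℤ)) l j⟫_ℝ := by
      intro j
      rw [real_inner_comm]
      rw [hSdef]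
      simp_rw [← innerSL_apply_apply (𝕜 := ℝ)]
      rw [(innerSL ℝ (g (t - (τ : ℤ)) l j)).map_tsum (hgsum t k)]
      simp_rw [innerSL_apply_apply]
      exact tsum_congr fun i => real_inner_comm _ _
    rw [h1]
    refine tsum_congr fun j => ?_
    rw [h2 j]
    rw [tsum_eq_single (j + τ) ?_]
    · exact hinner_g_eq t τ k l j
    · intro i hi
      refine hinner_g_ne _ _ _ _ _ _ ?_
      intro hcontra
      apply hi
      omega
end
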